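/- Let G be a finite simple graph on n vertices, let Ḡ be its complement, and let k be an integer with 1 ≤ k < n−1. Let L, L̄, and L_J denote the Laplacian matrices of F_k(G), F_k(Ḡ), and F_k(K_n) respectively (F_k(K_n) is the Johnson graph J(n,k)). Then there exists a basis v₁,…,v_N of ℝ^N, where N = C(n,k), and real numbers λᵢ, λ̄ᵢ for i = 1,…,N, such that for every i: L vᵢ = λᵢ vᵢ, L̄ vᵢ = λ̄ᵢ vᵢ, and L_J vᵢ = (λᵢ + λ̄ᵢ) vᵢ. In particular, every Laplacian eigenvalue of J(n,k) is the sum of one Laplacian eigenvalue of F_k(G) and one Laplacian eigenvalue of F_k(Ḡ), with each eigenvalue (counted with multiplicity) used exactly once. -/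

import Mathlib

open Finset Matrix
open scoped symmDiff

/-- The `k`-token graph of a graph `G`: vertices are the `k`-subsets of the vertex set,
two subsets `A`, `B` being adjacent iff their symmetric difference is a pair `{a, b}`
with `a ∈ A`, `b ∈ B` and `a` adjacent to `b` in `G`. -/
def tokenGraph {V : Type*} [DecidableEq V] (G : SimpleGraph V) (k : ℕ) :
    SimpleGraph {s : Finset V // s.card = k} where
  Adj A B := ∃ a b, a ∈ A.1 ∧ b ∈ B.1 ∧ G.Adj a b ∧ A.1 ∆ B.1 = {a, b}
  symm := by
    constructor
    rintro A B ⟨a, b, ha, hb, hab, hd⟩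
    exact ⟨b, a, hb, ha, hab.symm, by rw [symmDiff_comm, hd, Finset.pair_comm]⟩
  loopless := by
    constructor
    rintro A ⟨a, b, ha, hb, hab, hd⟩
    rw [symmDiff_self] at hd
    exact Finset.insert_ne_empty a {b} hd.symm

/-- The Laplacian matrix (over `ℝ`) of a finite simple graph: `L = D - A`. -/
noncomputable def Lap {V : Type*} [Fintype V] [DecidableEq V] (G : SimpleGraph V) :
    Matrix V V ℝ :=
  letI := Classical.decRel G.Adj
  G.lapMatrix ℝ

set_option linter.unusedSectionVars false

section Aux
variable {V : Type*} [Fintype V] [DecidableEq V] {k : ℕ}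

lemma lap_eq (H : SimpleGraph V) [inst : DecidableRel H.Adj] : Lap H = H.lapMatrix ℝ := by
  unfold Lap
  rw [Subsingleton.elim (Classical.decRel H.Adj) inst]

lemma swap_card {A : Finset V} {x y : V} (hx : x ∈ A) (hy : y ∉ A) :
    (insert y (A.erase x)).card = A.card := by
  have h1 : y ∉ A.erase x := fun h => hy (Finset.mem_of_mem_erase h)
  have h2 : 0 < A.card := Finset.card_pos.2 ⟨x, hx⟩
  rw [Finset.card_insert_of_notMem h1, Finset.card_erase_of_mem hx]
  omega

lemma symmDiff_swap {A : Finset V} {x y : V} (hx : x ∈ A) (hy : y ∉ A) :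
    A ∆ (insert y (A.erase x)) = {x, y} := by
  have hxy : x ≠ y := fun h => hy (h ▸ hx)
  ext z
  by_cases hzx : z = x <;> by_cases hzy : z = y <;>
    simp [Finset.mem_symmDiff, hzx, hzy, hx, hy, hxy, Ne.symm hxy]

lemma swap_eq_symmDiff {A : Finset V} {x y : V} (hx : x ∈ A) (hy : y ∉ A) :
    insert y (A.erase x) = A ∆ ({x, y} : Finset V) := by
  have := symmDiff_swap hx hy
  rw [← this, symmDiff_symmDiff_cancel_left]

lemma pair_of_symmDiff_card {S T : Finset V} (hcard : S.card = T.card)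
    (h2 : (S ∆ T).card = 2) :
    ∃ a b, a ∈ S ∧ a ∉ T ∧ b ∈ T ∧ b ∉ S ∧ S ∆ T = {a, b} := by
  have hdisj : Disjoint (S \ T) (T \ S) := disjoint_sdiff_sdiff
  have hd : S ∆ T = (S \ T) ∪ (T \ S) := by
    rw [symmDiff_def]; rfl
  have hcc : (S \ T).card = (T \ S).card := Finset.card_sdiff_comm hcard
  have hsum : (S \ T).card + (T \ S).card = 2 := by
    rw [← Finset.card_union_of_disjoint hdisj, ← hd, h2]
  have h1 : (S \ T).card = 1 := by omega
  have h1' : (T \ S).card = 1 := by omega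
  obtain ⟨a, ha⟩ := Finset.card_eq_one.1 h1
  obtain ⟨b, hb⟩ := Finset.card_eq_one.1 h1'
  have haS : a ∈ S \ T := ha ▸ Finset.mem_singleton_self a
  have hbT : b ∈ T \ S := hb ▸ Finset.mem_singleton_self b
  rw [Finset.mem_sdiff] at haS hbT
  exact ⟨a, b, haS.1, haS.2, hbT.1, hbT.2, by
    rw [hd, ha, hb]; ext z; simp [Finset.mem_insert]⟩

lemma tokenAdj_iff {H : SimpleGraph V} {A B : {s : Finset V // s.card = k}} :
    (tokenGraph H k).Adj A B ↔
      ∃ x y, x ∈ A.1 ∧ y ∉ A.1 ∧ H.Adj x y ∧ B.1 = insert y (A.1.erase x) := by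
  constructor
  · rintro ⟨a, b, ha, hb, hab, hd⟩
    have haAB : a ∈ A.1 ∆ B.1 := by rw [hd]; simp
    have hbAB : b ∈ A.1 ∆ B.1 := by rw [hd]; simp
    rw [Finset.mem_symmDiff] at haAB hbAB
    have haB : a ∉ B.1 := by rcases haAB with ⟨_, h⟩ | ⟨_, h⟩ <;> tauto
    have hbA : b ∉ A.1 := by rcases hbAB with ⟨_, h⟩ | ⟨h, _⟩ <;> tauto
    refine ⟨a, b, ha, hbA, hab, ?_⟩
    have : A.1 ∆ (insert b (A.1.erase a)) = {a, b} := symmDiff_swap ha hbA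
    have hBB : B.1 = A.1 ∆ ({a, b} : Finset V) := by
      rw [← hd, symmDiff_symmDiff_cancel_left]
    rw [hBB, ← this, symmDiff_symmDiff_cancel_left]
  · rintro ⟨x, y, hx, hy, hxy, hB⟩
    exact ⟨x, y, hx, by rw [hB]; exact Finset.mem_insert_self y _, hxy,
      by rw [hB]; exact symmDiff_swap hx hy⟩

end Aux

section Aux2
set_option linter.unusedSectionVars false
variable {V : Type*} [Fintype V] [DecidableEq V] {k : ℕ}

/-- swap one element of a `k`-set -/
def swapK (A : {s : Finset V // s.card = k}) (p : V × V) : {s : Finset V // s.card = k} :=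
  if h : p.1 ∈ A.1 ∧ p.2 ∉ A.1 then
    ⟨insert p.2 (A.1.erase p.1), by rw [swap_card h.1 h.2]; exact A.2⟩
  else A

lemma swapK_pos {A : {s : Finset V // s.card = k}} {p : V × V}
    (h1 : p.1 ∈ A.1) (h2 : p.2 ∉ A.1) :
    (swapK A p).1 = insert p.2 (A.1.erase p.1) := by
  rw [swapK, dif_pos ⟨h1, h2⟩]

lemma mem_pairs {A : {s : Finset V // s.card = k}} {H : SimpleGraph V} [DecidableRel H.Adj]
    {p : V × V} (hp : p ∈ (A.1 ×ˢ A.1ᶜ).filter (fun p => H.Adj p.1 p.2)) :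
    p.1 ∈ A.1 ∧ p.2 ∉ A.1 ∧ H.Adj p.1 p.2 := by
  rw [Finset.mem_filter, Finset.mem_product, Finset.mem_compl] at hp
  exact ⟨hp.1.1, hp.1.2, hp.2⟩

lemma swapK_adj {A : {s : Finset V // s.card = k}} {H : SimpleGraph V} [DecidableRel H.Adj]
    {p : V × V} (hp : p ∈ (A.1 ×ˢ A.1ᶜ).filter (fun p => H.Adj p.1 p.2)) :
    (tokenGraph H k).Adj A (swapK A p) := by
  obtain ⟨h1, h2, h3⟩ := mem_pairs hp
  exact tokenAdj_iff.2 ⟨p.1, p.2, h1, h2, h3, (swapK_pos h1 h2)⟩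

lemma sum_token_adj (H : SimpleGraph V) [DecidableRel H.Adj]
    [DecidableRel (tokenGraph H k).Adj]
    (A : {s : Finset V // s.card = k}) (f : {s : Finset V // s.card = k} → ℝ) :
    (∑ B : {s : Finset V // s.card = k}, if (tokenGraph H k).Adj A B then f B else 0)
      = ∑ p ∈ (A.1 ×ˢ A.1ᶜ).filter (fun p => H.Adj p.1 p.2), f (swapK A p) := by
  rw [← Finset.sum_filter]
  refine (Finset.sum_bij (fun p _ => swapK A p) (fun p hp => ?_) (fun p hp q hq hpq => ?_)
    (fun B hB => ?_) (fun p hp => rfl)).symm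
  · simp only [Finset.mem_filter, Finset.mem_univ, true_and]
    exact swapK_adj hp
  · obtain ⟨hp1, hp2, hp3⟩ := mem_pairs hp
    obtain ⟨hq1, hq2, hq3⟩ := mem_pairs hq
    have hdp : A.1 ∆ (swapK A p).1 = {p.1, p.2} := by
      rw [swapK_pos hp1 hp2]; exact symmDiff_swap hp1 hp2
    have hdq : A.1 ∆ (swapK A q).1 = {q.1, q.2} := by
      rw [swapK_pos hq1 hq2]; exact symmDiff_swap hq1 hq2
    have hpq' : swapK A p = swapK A q := hpq
    rw [hpq', hdq] at hdp
    have e1 : p.1 ∈ ({q.1, q.2} : Finset V) := by rw [hdp]; simp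
    have e2 : p.2 ∈ ({q.1, q.2} : Finset V) := by rw [hdp]; simp
    simp only [Finset.mem_insert, Finset.mem_singleton] at e1 e2
    have hp1q : p.1 = q.1 := by
      rcases e1 with h | h
      · exact h
      · exact absurd (show p.1 ∈ A.1 from hp1) (by rw [h]; exact hq2)
    have hp2q : p.2 = q.2 := by
      rcases e2 with h | h
      · exact absurd (show p.2 ∈ A.1 by rw [h]; exact hq1) hp2
      · exact h
    exact Prod.ext hp1q hp2q
  · simp only [Finset.mem_filter, Finset.mem_univ, true_and] at hB
    obtain ⟨x, y, hx, hy, hxy, hBeq⟩ := tokenAdj_iff.1 hB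
    refine ⟨(x, y), ?_, ?_⟩
    · rw [Finset.mem_filter, Finset.mem_product, Finset.mem_compl]
      exact ⟨⟨hx, hy⟩, hxy⟩
    · apply Subtype.ext
      rw [swapK_pos hx hy, hBeq]

lemma topTokenAdj_iff {A B : {s : Finset V // s.card = k}} :
    (tokenGraph (⊤ : SimpleGraph V) k).Adj A B ↔ (A.1 ∆ B.1).card = 2 := by
  constructor
  · rintro ⟨a, b, ha, hb, hab, hd⟩
    rw [hd]
    rw [Finset.card_insert_of_notMem (by simp [hab.ne]), Finset.card_singleton]
  · intro h
    have hcard : A.1.card = B.1.card := by rw [A.2, B.2]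
    obtain ⟨a, b, haS, haT, hbT, hbS, hd⟩ := pair_of_symmDiff_card hcard h
    have hne : a ≠ b := fun hh => haT (hh ▸ hbT)
    exact ⟨a, b, haS, hbT, by simp [hne], hd⟩

lemma pair_symmDiff_card {a c x y : V} (hac : a ≠ c) (hxy : x ≠ y)
    (hya : y ≠ a) (hxc : x ≠ c) :
    ((({a, c} : Finset V) ∆ {x, y}).card = 2) ↔ ((x = a ∧ y ≠ c) ∨ (x ≠ a ∧ y = c)) := by
  by_cases h1 : x = a <;> by_cases h2 : y = c
  · subst h1; subst h2; simp [symmDiff_self]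
  · subst h1
    have hset : ({x, c} : Finset V) ∆ {x, y} = {c, y} := by
      ext z
      by_cases hzx : z = x <;> by_cases hzc : z = c <;> by_cases hzy : z = y <;>
        simp_all [Finset.mem_symmDiff]
    rw [hset]
    have : y ≠ c := h2
    simp [h2, Finset.card_insert_of_notMem, Ne.symm this]
  · subst h2
    have hset : ({a, y} : Finset V) ∆ {x, y} = {a, x} := by
      ext z
      by_cases hza : z = a <;> by_cases hzx : z = x <;> by_cases hzy : z = y <;>
        simp_all [Finset.mem_symmDiff]
    rw [hset]
    have hax : a ≠ x := fun hh => h1 hh.symm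
    rw [Finset.card_insert_of_notMem (by simp [hax]), Finset.card_singleton]
    simp [h1]
  · have hset : (({a, c} : Finset V) ∆ {x, y}) = {a, c, x, y} := by
      ext z
      by_cases hza : z = a <;> by_cases hzc : z = c <;> by_cases hzx : z = x <;>
        by_cases hzy : z = y <;> simp_all [Finset.mem_symmDiff]
    rw [hset]
    have hcard : ({a, c, x, y} : Finset V).card = 4 := by
      rw [Finset.card_insert_of_notMem (by
          simp only [Finset.mem_insert, Finset.mem_singleton]; push_neg
          exact ⟨hac, fun hh => h1 hh.symm, fun hh => hya hh.symm⟩),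
        Finset.card_insert_of_notMem (by
          simp only [Finset.mem_insert, Finset.mem_singleton]; push_neg
          exact ⟨fun hh => hxc hh.symm, fun hh => h2 hh.symm⟩),
        Finset.card_insert_of_notMem (by simp [hxy]), Finset.card_singleton]
    rw [hcard]
    norm_num [h1, h2]

end Aux2
section Aux3
set_option linter.unusedSectionVars false
set_option maxHeartbeats 1000000
variable {V : Type*} [Fintype V] [DecidableEq V] {k : ℕ}

lemma adj_struct {H : SimpleGraph V} {A B : {s : Finset V // s.card = k}}
    (h : (tokenGraph H k).Adj A B) :
    ∃ a b, a ∈ A.1 ∧ a ∉ B.1 ∧ b ∈ B.1 ∧ b ∉ A.1 ∧ H.Adj a b ∧ A.1 ∆ B.1 = {a, b} := by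
  obtain ⟨a, b, ha, hb, hab, hd⟩ := h
  have haAB : a ∈ A.1 ∆ B.1 := by rw [hd]; simp
  have hbAB : b ∈ A.1 ∆ B.1 := by rw [hd]; simp
  rw [Finset.mem_symmDiff] at haAB hbAB
  have haB : a ∉ B.1 := by rcases haAB with ⟨_, h⟩ | ⟨_, h⟩ <;> tauto
  have hbA : b ∉ A.1 := by rcases hbAB with ⟨_, h⟩ | ⟨h, _⟩ <;> tauto
  exact ⟨a, b, ha, haB, hb, hbA, hab, hd⟩

lemma mem_symmDiff_iff_pair {A C : Finset V} {a c : V} (hd : A ∆ C = {a, c}) (z : V) :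
    z ∈ A ∆ C ↔ (z = a ∨ z = c) := by rw [hd]; simp

lemma inter_eq_erase {A C : Finset V} {a c : V} (ha : a ∈ A) (hc : c ∈ C)
    (ha' : a ∉ C) (hc' : c ∉ A) (hd : A ∆ C = {a, c}) : A ∩ C = A.erase a := by
  ext z
  simp only [Finset.mem_inter, Finset.mem_erase]
  constructor
  · rintro ⟨hzA, hzC⟩
    refine ⟨fun hza => ha' (hza ▸ hzC), hzA⟩
  · rintro ⟨hza, hzA⟩
    refine ⟨hzA, ?_⟩
    by_contra hzC
    have : z ∈ A ∆ C := Finset.mem_symmDiff.2 (Or.inl ⟨hzA, hzC⟩)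
    rcases (mem_symmDiff_iff_pair hd z).1 this with h | h
    · exact hza h
    · exact hc' (h ▸ hzA)

lemma compl_inter_eq_erase {A C : Finset V} {a c : V} (ha : a ∈ A) (hc : c ∈ C)
    (ha' : a ∉ C) (hc' : c ∉ A) (hd : A ∆ C = {a, c}) : Aᶜ ∩ Cᶜ = Aᶜ.erase c := by
  ext z
  simp only [Finset.mem_inter, Finset.mem_erase, Finset.mem_compl]
  constructor
  · rintro ⟨hzA, hzC⟩
    exact ⟨fun hzc => hzC (hzc ▸ hc), hzA⟩
  · rintro ⟨hzc, hzA⟩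
    refine ⟨hzA, ?_⟩
    by_contra hzC
    have : z ∈ A ∆ C := Finset.mem_symmDiff.2 (Or.inr ⟨hzC, hzA⟩)
    rcases (mem_symmDiff_iff_pair hd z).1 this with h | h
    · exact hzA (h ▸ ha)
    · exact hzc h

lemma deg_top [DecidableRel (tokenGraph (⊤ : SimpleGraph V) k).Adj]
    (A : {s : Finset V // s.card = k}) :
    (((tokenGraph (⊤ : SimpleGraph V) k).degree A : ℝ))
      = ((k * (Fintype.card V - k) : ℕ) : ℝ) := by
  rw [SimpleGraph.degree_eq_sum_if_adj,
    sum_token_adj (⊤ : SimpleGraph V) A (fun _ => (1 : ℝ))]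
  rw [Finset.filter_true_of_mem (fun p hp => ?_), Finset.sum_const]
  · rw [Finset.card_product, Finset.card_compl, A.2]
    simp
  · rw [Finset.mem_product, Finset.mem_compl] at hp
    exact fun heq => hp.2 (heq ▸ hp.1)

lemma sum_ind (P Q : {s : Finset V // s.card = k} → Prop) [DecidablePred P] [DecidablePred Q] :
    (∑ B : {s : Finset V // s.card = k}, (if P B then (1:ℝ) else 0) * (if Q B then 1 else 0))
      = ((Finset.univ.filter fun B => P B ∧ Q B).card : ℝ) := by
  rw [Finset.card_filter]
  push_cast
  refine Finset.sum_congr rfl fun B _ => ?_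
  by_cases hP : P B <;> by_cases hQ : Q B <;> simp [hP, hQ]

end Aux3
section Aux4
set_option linter.unusedSectionVars false
set_option maxHeartbeats 1000000
variable {V : Type*} [Fintype V] [DecidableEq V] {k : ℕ}

lemma key_count (H : SimpleGraph V) [DecidableRel H.Adj]
    [DecidableRel (tokenGraph H k).Adj]
    [DecidableRel (tokenGraph (⊤ : SimpleGraph V) k).Adj]
    {A C : {s : Finset V // s.card = k}} {a c : V}
    (ha : a ∈ A.1) (hc : c ∈ C.1) (ha' : a ∉ C.1) (hc' : c ∉ A.1)
    (hd : A.1 ∆ C.1 = {a, c}) :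
    ((tokenGraph H k).degree A : ℝ)
      - (∑ B : {s : Finset V // s.card = k},
          (if (tokenGraph H k).Adj A B then (1:ℝ) else 0) *
          (if (tokenGraph (⊤ : SimpleGraph V) k).Adj B C then (1:ℝ) else 0))
      = (if H.Adj a c then (1:ℝ) else 0)
        + ((((A.1 ∩ C.1) ×ˢ (A.1ᶜ ∩ C.1ᶜ)).filter (fun p => H.Adj p.1 p.2)).card : ℝ) := by
  have hac : a ≠ c := fun h => ha' (h ▸ hc)
  have hN : (∑ B : {s : Finset V // s.card = k},
        (if (tokenGraph H k).Adj A B then (1:ℝ) else 0) *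
        (if (tokenGraph (⊤ : SimpleGraph V) k).Adj B C then (1:ℝ) else 0))
      = ∑ p ∈ (A.1 ×ˢ A.1ᶜ).filter (fun p => H.Adj p.1 p.2),
          (if (tokenGraph (⊤ : SimpleGraph V) k).Adj (swapK A p) C then (1:ℝ) else 0) := by
    simp only [ite_mul, one_mul, zero_mul]
    exact sum_token_adj H A (fun B => if (tokenGraph (⊤ : SimpleGraph V) k).Adj B C then (1:ℝ) else 0)
  have hdeg : ((tokenGraph H k).degree A : ℝ)
      = ∑ _p ∈ (A.1 ×ˢ A.1ᶜ).filter (fun p => H.Adj p.1 p.2), (1:ℝ) := by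
    rw [SimpleGraph.degree_eq_sum_if_adj, sum_token_adj H A (fun _ => (1:ℝ))]
  rw [hN, hdeg, ← Finset.sum_sub_distrib]
  have hstep : ∀ p ∈ (A.1 ×ˢ A.1ᶜ).filter (fun p => H.Adj p.1 p.2),
      (1:ℝ) - (if (tokenGraph (⊤ : SimpleGraph V) k).Adj (swapK A p) C then (1:ℝ) else 0)
      = (if p = (a, c) then (1:ℝ) else 0) + (if p.1 ≠ a ∧ p.2 ≠ c then (1:ℝ) else 0) := by
    intro p hp
    obtain ⟨hp1, hp2, hp3⟩ := mem_pairs hp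
    have hne : p.1 ≠ p.2 := H.ne_of_adj hp3
    have hya : p.2 ≠ a := fun h => hp2 (h ▸ ha)
    have hxc : p.1 ≠ c := fun h => hc' (h ▸ hp1)
    have hQ : (tokenGraph (⊤ : SimpleGraph V) k).Adj (swapK A p) C ↔
        ((p.1 = a ∧ p.2 ≠ c) ∨ (p.1 ≠ a ∧ p.2 = c)) := by
      rw [topTokenAdj_iff]
      have hs : (swapK A p).1 = A.1 ∆ ({p.1, p.2} : Finset V) := by
        rw [swapK_pos hp1 hp2]; exact swap_eq_symmDiff hp1 hp2
      rw [hs, symmDiff_right_comm, hd]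
      exact pair_symmDiff_card hac hne hya hxc
    by_cases h1 : p.1 = a <;> by_cases h2 : p.2 = c <;>
      simp [hQ, h1, h2, Prod.ext_iff]
  rw [Finset.sum_congr rfl hstep, Finset.sum_add_distrib]
  congr 1
  · rw [Finset.sum_ite_eq' _ ((a, c) : V × V) (fun _ => (1:ℝ))]
    have hmem : ((a, c) : V × V) ∈ (A.1 ×ˢ A.1ᶜ).filter (fun p => H.Adj p.1 p.2) ↔ H.Adj a c := by
      simp [Finset.mem_filter, Finset.mem_product, ha, hc']
    exact if_congr hmem rfl rfl
  · rw [Finset.sum_boole]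
    congr 1
    rw [Finset.filter_filter]
    rw [inter_eq_erase ha hc ha' hc' hd, compl_inter_eq_erase ha hc ha' hc' hd]
    congr 1
    ext p
    simp only [Finset.mem_filter, Finset.mem_product, Finset.mem_erase, Finset.mem_compl]
    tauto

end Aux4
section Aux5
set_option linter.unusedSectionVars false
set_option maxHeartbeats 1000000
variable {V : Type*} [Fintype V] [DecidableEq V] {k : ℕ}

lemma cross_mem (H : SimpleGraph V) {A C B : {s : Finset V // s.card = k}}
    (hne : A ≠ C) (hnadj : ¬ (tokenGraph (⊤ : SimpleGraph V) k).Adj A C)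
    (h1 : (tokenGraph H k).Adj A B)
    (h2 : (tokenGraph (⊤ : SimpleGraph V) k).Adj B C) :
    ∃ (hk : (C.1 ∆ (A.1 ∆ B.1)).card = k),
      (tokenGraph (⊤ : SimpleGraph V) k).Adj A ⟨C.1 ∆ (A.1 ∆ B.1), hk⟩ ∧
      (tokenGraph H k).Adj ⟨C.1 ∆ (A.1 ∆ B.1), hk⟩ C := by
  obtain ⟨x, y, hxA, hxB, hyB, hyA, hH, hdAB⟩ := adj_struct h1
  have hxy : x ≠ y := H.ne_of_adj hH
  have hBC2 : (B.1 ∆ C.1).card = 2 := topTokenAdj_iff.1 h2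
  obtain ⟨u, w, huB, huC, hwC, hwB, hdBC⟩ :=
    pair_of_symmDiff_card (by rw [B.2, C.2]) hBC2
  have hACd : A.1 ∆ C.1 = ({x, y} : Finset V) ∆ {u, w} := by
    have h' : (A.1 ∆ B.1) ∆ (B.1 ∆ C.1) = A.1 ∆ C.1 := by
      rw [symmDiff_assoc, symmDiff_symmDiff_cancel_left]
    rw [← h', hdAB, hdBC]
  have hACne : A.1 ∆ C.1 ≠ ∅ := by
    intro h
    apply hne
    apply Subtype.ext
    have := symmDiff_eq_bot.1 (by rw [h]; rfl : A.1 ∆ C.1 = ⊥)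
    exact this
  have hACn2 : (A.1 ∆ C.1).card ≠ 2 := fun h => hnadj (topTokenAdj_iff.2 h)
  have hxu : x ≠ u := fun h => hxB (h ▸ huB)
  have hyw : y ≠ w := fun h => hwB (h ▸ hyB)
  by_cases hyu : y = u
  · by_cases hxw : x = w
    · exfalso
      apply hACne
      rw [hACd, ← hyu, ← hxw, Finset.pair_comm x y, symmDiff_self]
      rfl
    · exfalso
      apply hACn2
      rw [hACd, ← hyu]
      have hset : ({x, y} : Finset V) ∆ {y, w} = {x, w} := by
        ext z
        by_cases hzx : z = x <;> by_cases hzy : z = y <;> by_cases hzw : z = w <;>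
          simp_all [Finset.mem_symmDiff]
      rw [hset, Finset.card_insert_of_notMem (by simp [hxw]), Finset.card_singleton]
  · by_cases hxw : x = w
    · exfalso
      apply hACn2
      rw [hACd, ← hxw]
      have hset : ({x, y} : Finset V) ∆ {u, x} = {y, u} := by
        ext z
        by_cases hzx : z = x <;> by_cases hzy : z = y <;> by_cases hzu : z = u <;>
          simp_all [Finset.mem_symmDiff]
      rw [hset, Finset.card_insert_of_notMem (by simp [hyu]), Finset.card_singleton]
    · -- disjoint case
      have hxAC : x ∈ A.1 ∆ C.1 := by
        rw [hACd, Finset.mem_symmDiff]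
        exact Or.inl ⟨by simp, by simp [hxu, hxw]⟩
      have hyAC : y ∈ A.1 ∆ C.1 := by
        rw [hACd, Finset.mem_symmDiff]
        exact Or.inl ⟨by simp, by simp [hyu, hyw]⟩
      have hxC : x ∉ C.1 := by
        rw [Finset.mem_symmDiff] at hxAC
        rcases hxAC with ⟨_, h⟩ | ⟨_, h⟩
        · exact h
        · exact absurd hxA h
      have hyC : y ∈ C.1 := by
        rw [Finset.mem_symmDiff] at hyAC
        rcases hyAC with ⟨h, _⟩ | ⟨h, _⟩
        · exact absurd h hyA
        · exact h
      have hswap : C.1 ∆ (A.1 ∆ B.1) = insert x (C.1.erase y) := by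
        rw [hdAB, Finset.pair_comm x y, ← swap_eq_symmDiff hyC hxC]
      have hk : (C.1 ∆ (A.1 ∆ B.1)).card = k := by
        rw [hswap, swap_card hyC hxC, C.2]
      refine ⟨hk, ?_, ?_⟩
      · rw [topTokenAdj_iff]
        have hABC : A.1 ∆ (C.1 ∆ (A.1 ∆ B.1)) = B.1 ∆ C.1 := by
          rw [symmDiff_comm C.1 (A.1 ∆ B.1), ← symmDiff_assoc,
            symmDiff_symmDiff_cancel_left]
        show (A.1 ∆ (C.1 ∆ (A.1 ∆ B.1))).card = 2
        rw [hABC, hBC2]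
      · refine ⟨x, y, ?_, hyC, hH, ?_⟩
        · show x ∈ C.1 ∆ (A.1 ∆ B.1)
          rw [hswap]; exact Finset.mem_insert_self x _
        · show (C.1 ∆ (A.1 ∆ B.1)) ∆ C.1 = {x, y}
          rw [symmDiff_comm C.1 (A.1 ∆ B.1), symmDiff_symmDiff_cancel_right, hdAB]

lemma cross_card_eq (H : SimpleGraph V) [DecidableRel H.Adj]
    [DecidableRel (tokenGraph H k).Adj]
    [DecidableRel (tokenGraph (⊤ : SimpleGraph V) k).Adj]
    {A C : {s : Finset V // s.card = k}}
    (hne : A ≠ C) (hnadj : ¬ (tokenGraph (⊤ : SimpleGraph V) k).Adj A C) :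
    (Finset.univ.filter fun B => (tokenGraph H k).Adj A B ∧
        (tokenGraph (⊤ : SimpleGraph V) k).Adj B C).card
      = (Finset.univ.filter fun B => (tokenGraph (⊤ : SimpleGraph V) k).Adj A B ∧
        (tokenGraph H k).Adj B C).card := by
  have hne' : C ≠ A := hne.symm
  have hnadj' : ¬ (tokenGraph (⊤ : SimpleGraph V) k).Adj C A := fun h => hnadj h.symm
  refine Finset.card_bij'
    (fun B hB => ⟨C.1 ∆ (A.1 ∆ B.1),
      (cross_mem H hne hnadj
        (by simpa using (Finset.mem_filter.1 hB).2.1)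
        (by simpa using (Finset.mem_filter.1 hB).2.2)).choose⟩)
    (fun B hB => ⟨A.1 ∆ (C.1 ∆ B.1),
      (cross_mem H hne' hnadj'
        (by exact ((Finset.mem_filter.1 hB).2.2).symm)
        (by exact ((Finset.mem_filter.1 hB).2.1).symm)).choose⟩)
    (fun B hB => ?_) (fun B hB => ?_) (fun B hB => ?_) (fun B hB => ?_)
  · have hspec := (cross_mem H hne hnadj
        (by simpa using (Finset.mem_filter.1 hB).2.1)
        (by simpa using (Finset.mem_filter.1 hB).2.2)).choose_spec
    rw [Finset.mem_filter]
    exact ⟨Finset.mem_univ _, hspec.1, hspec.2⟩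
  · have hspec := (cross_mem H hne' hnadj'
        (by exact ((Finset.mem_filter.1 hB).2.2).symm)
        (by exact ((Finset.mem_filter.1 hB).2.1).symm)).choose_spec
    rw [Finset.mem_filter]
    exact ⟨Finset.mem_univ _, hspec.2.symm, hspec.1.symm⟩
  · apply Subtype.ext
    show A.1 ∆ (C.1 ∆ (C.1 ∆ (A.1 ∆ B.1))) = B.1
    rw [symmDiff_symmDiff_cancel_left, symmDiff_symmDiff_cancel_left]
  · apply Subtype.ext
    show C.1 ∆ (A.1 ∆ (A.1 ∆ (C.1 ∆ B.1))) = B.1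
    rw [symmDiff_symmDiff_cancel_left, symmDiff_symmDiff_cancel_left]

end Aux5
section Aux6
set_option linter.unusedSectionVars false
set_option maxHeartbeats 1000000
variable {V : Type*} [Fintype V] [DecidableEq V] {k : ℕ}

lemma adj_key (H : SimpleGraph V) [DecidableRel H.Adj]
    [iH : DecidableRel (tokenGraph H k).Adj]
    [iT : DecidableRel (tokenGraph (⊤ : SimpleGraph V) k).Adj] :
    (tokenGraph H k).adjMatrix ℝ * (tokenGraph (⊤ : SimpleGraph V) k).adjMatrix ℝ
      - (tokenGraph (⊤ : SimpleGraph V) k).adjMatrix ℝ * (tokenGraph H k).adjMatrix ℝ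
    = (tokenGraph H k).degMatrix ℝ * (tokenGraph (⊤ : SimpleGraph V) k).adjMatrix ℝ
      - (tokenGraph (⊤ : SimpleGraph V) k).adjMatrix ℝ * (tokenGraph H k).degMatrix ℝ := by
  ext A C
  rw [Matrix.sub_apply, Matrix.sub_apply, Matrix.mul_apply, Matrix.mul_apply]
  rw [SimpleGraph.degMatrix, Matrix.diagonal_mul, Matrix.mul_diagonal]
  simp only [SimpleGraph.adjMatrix_apply]
  by_cases hAC : (tokenGraph (⊤ : SimpleGraph V) k).Adj A C
  · obtain ⟨a, c, haA, haC, hcC, hcA, _, hd⟩ := adj_struct hAC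
    have h2 : (∑ B : {s : Finset V // s.card = k},
          (if (tokenGraph (⊤ : SimpleGraph V) k).Adj A B then (1:ℝ) else 0) *
          (if (tokenGraph H k).Adj B C then (1:ℝ) else 0))
        = ∑ B : {s : Finset V // s.card = k},
          (if (tokenGraph H k).Adj C B then (1:ℝ) else 0) *
          (if (tokenGraph (⊤ : SimpleGraph V) k).Adj B A then (1:ℝ) else 0) := by
      refine Finset.sum_congr rfl fun B _ => ?_
      rw [mul_comm]
      congr 1
      · exact if_congr (SimpleGraph.adj_comm _ _ _) rfl rfl
      · exact if_congr (SimpleGraph.adj_comm _ _ _) rfl rfl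
    have key1 := key_count H haA hcC haC hcA hd
    have hd' : C.1 ∆ A.1 = {c, a} := by rw [symmDiff_comm, hd, Finset.pair_comm]
    have key2 := key_count H hcC haA hcA haC hd'
    have hRHS : ((if H.Adj a c then (1:ℝ) else 0)
          + ((((A.1 ∩ C.1) ×ˢ (A.1ᶜ ∩ C.1ᶜ)).filter (fun p => H.Adj p.1 p.2)).card : ℝ))
        = ((if H.Adj c a then (1:ℝ) else 0)
          + ((((C.1 ∩ A.1) ×ˢ (C.1ᶜ ∩ A.1ᶜ)).filter (fun p => H.Adj p.1 p.2)).card : ℝ)) := by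
      rw [Finset.inter_comm C.1 A.1, Finset.inter_comm C.1ᶜ A.1ᶜ]
      congr 1
      exact if_congr (SimpleGraph.adj_comm _ _ _) rfl rfl
    rw [if_pos hAC, h2]
    linarith [key1, key2, hRHS]
  · rw [if_neg hAC]
    by_cases heq : A = C
    · subst heq
      have h2 : (∑ B : {s : Finset V // s.card = k},
            (if (tokenGraph H k).Adj A B then (1:ℝ) else 0) *
            (if (tokenGraph (⊤ : SimpleGraph V) k).Adj B A then (1:ℝ) else 0))
          = ∑ B : {s : Finset V // s.card = k},
            (if (tokenGraph (⊤ : SimpleGraph V) k).Adj A B then (1:ℝ) else 0) *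
            (if (tokenGraph H k).Adj B A then (1:ℝ) else 0) := by
        refine Finset.sum_congr rfl fun B _ => ?_
        rw [mul_comm]
        congr 1
        · exact if_congr (SimpleGraph.adj_comm _ _ _) rfl rfl
        · exact if_congr (SimpleGraph.adj_comm _ _ _) rfl rfl
      rw [h2]
      ring
    · rw [@sum_ind V _ _ k (fun B => (tokenGraph H k).Adj A B)
          (fun B => (tokenGraph (⊤ : SimpleGraph V) k).Adj B C)
          (fun B => iH A B) (fun B => iT B C),
        @sum_ind V _ _ k (fun B => (tokenGraph (⊤ : SimpleGraph V) k).Adj A B)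
          (fun B => (tokenGraph H k).Adj B C)
          (fun B => iT A B) (fun B => iH B C),
        cross_card_eq H heq hAC]
      ring

lemma lap_comm (H : SimpleGraph V) [DecidableRel H.Adj]
    [iH : DecidableRel (tokenGraph H k).Adj]
    [iT : DecidableRel (tokenGraph (⊤ : SimpleGraph V) k).Adj] :
    (tokenGraph H k).lapMatrix ℝ * (tokenGraph (⊤ : SimpleGraph V) k).lapMatrix ℝ
      = (tokenGraph (⊤ : SimpleGraph V) k).lapMatrix ℝ * (tokenGraph H k).lapMatrix ℝ := by
  have hD2 : (tokenGraph (⊤ : SimpleGraph V) k).degMatrix ℝ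
      = Matrix.diagonal (fun _ => ((k * (Fintype.card V - k) : ℕ) : ℝ)) := by
    rw [SimpleGraph.degMatrix]
    ext A B
    by_cases h : A = B
    · subst h
      rw [Matrix.diagonal_apply_eq, Matrix.diagonal_apply_eq]
      exact deg_top A
    · rw [Matrix.diagonal_apply_ne _ h, Matrix.diagonal_apply_ne _ h]
  have hconst : ∀ (M : Matrix {s : Finset V // s.card = k} {s : Finset V // s.card = k} ℝ),
      (tokenGraph (⊤ : SimpleGraph V) k).degMatrix ℝ * M
        = M * (tokenGraph (⊤ : SimpleGraph V) k).degMatrix ℝ := by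
    intro M
    rw [hD2]
    ext i j
    rw [Matrix.diagonal_mul, Matrix.mul_diagonal, mul_comm]
  have hkey := adj_key (k := k) H
  set D1 := (tokenGraph H k).degMatrix ℝ
  set A1 := (tokenGraph H k).adjMatrix ℝ
  set D2 := (tokenGraph (⊤ : SimpleGraph V) k).degMatrix ℝ
  set A2 := (tokenGraph (⊤ : SimpleGraph V) k).adjMatrix ℝ
  show (D1 - A1) * (D2 - A2) = (D2 - A2) * (D1 - A1)
  have h0 : (D1 - A1) * (D2 - A2) - (D2 - A2) * (D1 - A1) = 0 := by
    have expand : (D1 - A1) * (D2 - A2) - (D2 - A2) * (D1 - A1)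
        = ((A1 * A2 - A2 * A1) - (D1 * A2 - A2 * D1))
          + (D1 * D2 - D2 * D1) + (D2 * A1 - A1 * D2) := by
      noncomm_ring
    rw [expand, hkey, hconst D1, hconst A1]
    simp
  have := sub_eq_zero.1 h0
  exact this

lemma top_adj_iff (G : SimpleGraph V) {A B : {s : Finset V // s.card = k}} :
    (tokenGraph (⊤ : SimpleGraph V) k).Adj A B ↔
      (tokenGraph G k).Adj A B ∨ (tokenGraph Gᶜ k).Adj A B := by
  constructor
  · rintro ⟨a, b, ha, hb, hab, hd⟩
    rw [SimpleGraph.top_adj] at hab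
    by_cases hG : G.Adj a b
    · exact Or.inl ⟨a, b, ha, hb, hG, hd⟩
    · exact Or.inr ⟨a, b, ha, hb, (G.compl_adj a b).2 ⟨hab, hG⟩, hd⟩
  · rintro (⟨a, b, ha, hb, hab, hd⟩ | ⟨a, b, ha, hb, hab, hd⟩)
    · exact ⟨a, b, ha, hb, by simp [hab.ne], hd⟩
    · exact ⟨a, b, ha, hb, by simp [hab.ne], hd⟩

lemma not_both_adj (G : SimpleGraph V) {A B : {s : Finset V // s.card = k}}
    (h1 : (tokenGraph G k).Adj A B) (h2 : (tokenGraph Gᶜ k).Adj A B) : False := by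
  obtain ⟨a, b, haA, haB, hbB, hbA, hab, hd⟩ := adj_struct h1
  obtain ⟨a', b', haA', haB', hbB', hbA', hab', hd'⟩ := adj_struct h2
  have hmm : a' ∈ ({a, b} : Finset V) := by
    rw [← hd, Finset.mem_symmDiff]; exact Or.inl ⟨haA', haB'⟩
  have hmm2 : b' ∈ ({a, b} : Finset V) := by
    rw [← hd, Finset.mem_symmDiff]; exact Or.inr ⟨hbB', hbA'⟩
  simp only [Finset.mem_insert, Finset.mem_singleton] at hmm hmm2
  have ha' : a' = a := by
    rcases hmm with h | h
    · exact h
    · exact absurd (h ▸ haA') hbA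
  have hb' : b' = b := by
    rcases hmm2 with h | h
    · exact absurd (h ▸ hbB') haB
    · exact h
  rw [ha', hb'] at hab'
  exact ((G.compl_adj a b).1 hab').2 hab

lemma lap_sum (G : SimpleGraph V)
    [iG : DecidableRel (tokenGraph G k).Adj]
    [iGc : DecidableRel (tokenGraph Gᶜ k).Adj]
    [iT : DecidableRel (tokenGraph (⊤ : SimpleGraph V) k).Adj] :
    (tokenGraph G k).lapMatrix ℝ + (tokenGraph Gᶜ k).lapMatrix ℝ
      = (tokenGraph (⊤ : SimpleGraph V) k).lapMatrix ℝ := by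
  ext A B
  simp only [SimpleGraph.lapMatrix, SimpleGraph.degMatrix, Matrix.sub_apply, Matrix.add_apply,
    Matrix.diagonal_apply, SimpleGraph.adjMatrix_apply]
  by_cases hAB : A = B
  · subst hAB
    rw [if_pos rfl, if_pos rfl, if_pos rfl,
      if_neg (SimpleGraph.irrefl _), if_neg (SimpleGraph.irrefl _),
      if_neg (SimpleGraph.irrefl _), sub_zero, sub_zero, sub_zero,
      SimpleGraph.degree_eq_sum_if_adj (G := tokenGraph G k) (R := ℝ) A,
      SimpleGraph.degree_eq_sum_if_adj (G := tokenGraph Gᶜ k) (R := ℝ) A,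
      SimpleGraph.degree_eq_sum_if_adj (G := tokenGraph (⊤ : SimpleGraph V) k) (R := ℝ) A,
      ← Finset.sum_add_distrib]
    refine Finset.sum_congr rfl fun C _ => ?_
    by_cases h1 : (tokenGraph G k).Adj A C <;> by_cases h2 : (tokenGraph Gᶜ k).Adj A C
    · exact absurd h2 (fun h => not_both_adj G h1 h)
    · rw [if_pos h1, if_neg h2, if_pos ((top_adj_iff G).2 (Or.inl h1))]; ring
    · rw [if_neg h1, if_pos h2, if_pos ((top_adj_iff G).2 (Or.inr h2))]; ring
    · rw [if_neg h1, if_neg h2, if_neg (fun h => by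
        rcases (top_adj_iff G).1 h with hh | hh
        · exact h1 hh
        · exact h2 hh)]
      ring
  · rw [if_neg hAB, if_neg hAB, if_neg hAB]
    by_cases h1 : (tokenGraph G k).Adj A B <;> by_cases h2 : (tokenGraph Gᶜ k).Adj A B
    · exact absurd h2 (fun h => not_both_adj G h1 h)
    · rw [if_pos h1, if_neg h2, if_pos ((top_adj_iff G).2 (Or.inl h1))]; ring
    · rw [if_neg h1, if_pos h2, if_pos ((top_adj_iff G).2 (Or.inr h2))]; ring
    · rw [if_neg h1, if_neg h2, if_neg (fun h => by
        rcases (top_adj_iff G).1 h with hh | hh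
        · exact h1 hh
        · exact h2 hh)]
      ring

end Aux6

set_option maxHeartbeats 1000000 in
/-- For `1 ≤ k < n - 1`, there is a basis of `ℝ^N`, `N = C(n,k)`,
consisting of common eigenvectors of the Laplacians `L`, `L̄`, `L_J` of `F_k(G)`,
`F_k(Ḡ)` and `F_k(K_n) = J(n,k)`, such that the corresponding eigenvalues satisfy
`λ_J = λ + λ̄` for each basis vector. -/
theorem lap_token_compl_simultaneous_diag (n k : ℕ) (hk1 : 1 ≤ k) (hk2 : k < n - 1)
    (G : SimpleGraph (Fin n)) :
    ∃ (v : Fin (n.choose k) → {s : Finset (Fin n) // s.card = k} → ℝ)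
      (lam lambar : Fin (n.choose k) → ℝ),
      LinearIndependent ℝ v ∧ Submodule.span ℝ (Set.range v) = ⊤ ∧
      ∀ i, Lap (tokenGraph G k) *ᵥ v i = lam i • v i ∧
        Lap (tokenGraph Gᶜ k) *ᵥ v i = lambar i • v i ∧
        Lap (tokenGraph (⊤ : SimpleGraph (Fin n)) k) *ᵥ v i =
          (lam i + lambar i) • v i := by
  letI iGA : DecidableRel G.Adj := Classical.decRel _
  letI iG : DecidableRel (tokenGraph G k).Adj := Classical.decRel _
  letI iGc : DecidableRel (tokenGraph Gᶜ k).Adj := Classical.decRel _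
  letI iT : DecidableRel (tokenGraph (⊤ : SimpleGraph (Fin n)) k).Adj := Classical.decRel _
  have hLG : Lap (tokenGraph G k) = (tokenGraph G k).lapMatrix ℝ := lap_eq _
  have hLGc : Lap (tokenGraph Gᶜ k) = (tokenGraph Gᶜ k).lapMatrix ℝ := lap_eq _
  have hLT : Lap (tokenGraph (⊤ : SimpleGraph (Fin n)) k)
      = (tokenGraph (⊤ : SimpleGraph (Fin n)) k).lapMatrix ℝ := lap_eq _
  have hsum : Lap (tokenGraph G k) + Lap (tokenGraph Gᶜ k)
      = Lap (tokenGraph (⊤ : SimpleGraph (Fin n)) k) := by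
    rw [hLG, hLGc, hLT]; exact lap_sum G
  have hcomm : Lap (tokenGraph G k) * Lap (tokenGraph (⊤ : SimpleGraph (Fin n)) k)
      = Lap (tokenGraph (⊤ : SimpleGraph (Fin n)) k) * Lap (tokenGraph G k) := by
    rw [hLG, hLT]; exact lap_comm G
  have hherm1 : (Lap (tokenGraph G k)).IsHermitian := by
    rw [hLG]; exact (SimpleGraph.posSemidef_lapMatrix ℝ (tokenGraph G k)).1
  have hherm2 : (Lap (tokenGraph (⊤ : SimpleGraph (Fin n)) k)).IsHermitian := by
    rw [hLT]
    exact (SimpleGraph.posSemidef_lapMatrix ℝ (tokenGraph (⊤ : SimpleGraph (Fin n)) k)).1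
  set KK := {s : Finset (Fin n) // s.card = k}
  let Aop : EuclideanSpace ℝ KK →ₗ[ℝ] EuclideanSpace ℝ KK :=
    Matrix.toEuclideanLin (Lap (tokenGraph G k))
  let Bop : EuclideanSpace ℝ KK →ₗ[ℝ] EuclideanSpace ℝ KK :=
    Matrix.toEuclideanLin (Lap (tokenGraph (⊤ : SimpleGraph (Fin n)) k))
  have hAs : Aop.IsSymmetric := Matrix.isHermitian_iff_isSymmetric.1 hherm1
  have hBs : Bop.IsSymmetric := Matrix.isHermitian_iff_isSymmetric.1 hherm2
  have hmul : ∀ (M N : Matrix KK KK ℝ) (x : EuclideanSpace ℝ KK),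
      Matrix.toEuclideanLin M (Matrix.toEuclideanLin N x)
        = Matrix.toEuclideanLin (M * N) x := by
    intro M N x
    simp [Matrix.toEuclideanLin_apply, Matrix.mulVec_mulVec]
  have hABc : Commute Aop Bop := by
    apply LinearMap.ext
    intro x
    simp only [Module.End.mul_apply, Aop, Bop, hmul, hcomm]
  have hInt := LinearMap.IsSymmetric.directSum_isInternal_of_commute hAs hBs hABc
  let bcomp : ∀ i : ℝ × ℝ, Module.Basis _ ℝ
      ↥(Module.End.eigenspace Aop i.2 ⊓ Module.End.eigenspace Bop i.1) :=
    fun i => Module.Basis.ofVectorSpace ℝ _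
  let b := hInt.collectedBasis bcomp
  haveI : Fintype (Σ i : ℝ × ℝ, Module.Basis.ofVectorSpaceIndex ℝ
      ↥(Module.End.eigenspace Aop i.2 ⊓ Module.End.eigenspace Bop i.1)) :=
    FiniteDimensional.fintypeBasisIndex b
  have hcardE : Fintype.card (Σ i : ℝ × ℝ, Module.Basis.ofVectorSpaceIndex ℝ
      ↥(Module.End.eigenspace Aop i.2 ⊓ Module.End.eigenspace Bop i.1)) = n.choose k := by
    rw [← Module.finrank_eq_card_basis b, finrank_euclideanSpace]
    rw [Fintype.card_finset_len, Fintype.card_fin]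
  let e := Fintype.equivFinOfCardEq hcardE
  let bb := b.reindex e
  let lE : EuclideanSpace ℝ KK ≃ₗ[ℝ] (KK → ℝ) := WithLp.linearEquiv 2 ℝ (KK → ℝ)
  refine ⟨fun i => lE (bb i), fun i => (e.symm i).1.2,
    fun i => (e.symm i).1.1 - (e.symm i).1.2, ?_, ?_, ?_⟩
  · exact (bb.linearIndependent).map' lE.toLinearMap lE.ker
  · have hr : Set.range (fun i => lE (bb i)) = ⇑(lE.toLinearMap) '' Set.range ⇑bb := by
      rw [← Set.range_comp]; rfl
    rw [hr, ← Submodule.map_span, bb.span_eq, Submodule.map_top]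
    exact LinearMap.range_eq_top.2 lE.surjective
  · intro i
    have hbb : bb i = b (e.symm i) := Module.Basis.reindex_apply b e i
    have hmem := hInt.collectedBasis_mem bcomp (e.symm i)
    rw [← hbb] at hmem
    rw [Submodule.mem_inf] at hmem
    obtain ⟨h1, h2⟩ := hmem
    rw [Module.End.mem_eigenspace_iff] at h1 h2
    have key1 : Lap (tokenGraph G k) *ᵥ (lE (bb i)) = (e.symm i).1.2 • (lE (bb i)) := by
      have hh := congrArg lE h1
      rw [_root_.map_smul] at hh
      simpa [Aop, Matrix.toEuclideanLin_apply, lE] using hh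
    have key2 : Lap (tokenGraph (⊤ : SimpleGraph (Fin n)) k) *ᵥ (lE (bb i))
        = (e.symm i).1.1 • (lE (bb i)) := by
      have hh := congrArg lE h2
      rw [_root_.map_smul] at hh
      simpa [Bop, Matrix.toEuclideanLin_apply, lE] using hh
    have key3 : Lap (tokenGraph Gᶜ k) *ᵥ (lE (bb i))
        = ((e.symm i).1.1 - (e.symm i).1.2) • (lE (bb i)) := by
      have hGc : Lap (tokenGraph Gᶜ k)
          = Lap (tokenGraph (⊤ : SimpleGraph (Fin n)) k) - Lap (tokenGraph G k) :=
        (eq_sub_of_add_eq' hsum)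
      rw [hGc, Matrix.sub_mulVec, key1, key2, sub_smul]
    refine ⟨key1, key3, ?_⟩
    have harith : (e.symm i).1.2 + ((e.symm i).1.1 - (e.symm i).1.2) = (e.symm i).1.1 := by
      ring
    rw [harith]
    exact key2
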